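/- arXiv:math/0501122 — 3 statements merged into one kernel-verified Lean document; each statement's English description precedes it below -/
import Mathlib

section
/- Let p and l be distinct odd primes. Two elements x, y ∈ Γ̃ commute in ℍ(ℤ) if and only if their images ψ(x), ψ(y) commute in PGL₂(ℚ_p) × PGL₂(ℚ_l). -/
open Quaternion Matrix
open scoped Classical

noncomputable section

/-- The set `Γ̃` of integer quaternions with norm `p^r l^s` and the appropriate
parity conditions. -/
def GammaTilde (p l : ℕ) : Set ℍ[ℤ] :=
  {x | (∃ r s : ℕ, Quaternion.normSq x = (p : ℤ) ^ r * (l : ℤ) ^ s) ∧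
       (Quaternion.normSq x % 4 = 1 →
          Odd x.re ∧ Even x.imI ∧ Even x.imJ ∧ Even x.imK) ∧
       (Quaternion.normSq x % 4 = 3 →
          Even x.imI ∧ Odd x.re ∧ Odd x.imJ ∧ Odd x.imK)}

/-- The set `Ã ⊆ Γ̃` of elements of positive real part and norm `p`. -/
def Atilde (p l : ℕ) : Set ℍ[ℤ] :=
  {x | x ∈ GammaTilde p l ∧ 0 < x.re ∧ Quaternion.normSq x = (p : ℤ)}

/-- The set `B̃ ⊆ Γ̃` of elements of positive real part and norm `l`. -/
def Btilde (p l : ℕ) : Set ℍ[ℤ] :=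
  {y | y ∈ GammaTilde p l ∧ 0 < y.re ∧ Quaternion.normSq y = (l : ℤ)}

/-- The projective general linear group `PGL₂(K)`: `GL₂(K)` modulo its center. -/
abbrev PGL2 (K : Type*) [Field K] : Type _ :=
  GL (Fin 2) K ⧸ Subgroup.center (GL (Fin 2) K)

/-- The matrix `M_{c,d}(x)` associated to an integer quaternion `x`. -/
def Mcd {K : Type*} [Field K] (c d : K) (x : ℍ[ℤ]) : Matrix (Fin 2) (Fin 2) K :=
  !![(x.re : K) + (x.imI : K) * c + (x.imK : K) * d,
     -(x.imI : K) * d + (x.imJ : K) + (x.imK : K) * c;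
     -(x.imI : K) * d - (x.imJ : K) + (x.imK : K) * c,
     (x.re : K) - (x.imI : K) * c - (x.imK : K) * d]

lemma det_Mcd {K : Type*} [Field K] {c d : K} (hcd : c ^ 2 + d ^ 2 + 1 = 0)
    (x : ℍ[ℤ]) : (Mcd c d x).det = ((Quaternion.normSq x : ℤ) : K) := by
  rw [Quaternion.normSq_def']
  rw [Mcd, Matrix.det_fin_two_of]
  push_cast
  linear_combination (-(x.imI : K) ^ 2 - (x.imK : K) ^ 2) * hcd

lemma det_Mcd_ne_zero {K : Type*} [Field K] [CharZero K] {c d : K}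
    (hcd : c ^ 2 + d ^ 2 + 1 = 0) {x : ℍ[ℤ]} (hx : x ≠ 0) :
    (Mcd c d x).det ≠ 0 := by
  rw [det_Mcd hcd]
  exact_mod_cast Quaternion.normSq_ne_zero.mpr hx

/-- The image of a nonzero integer quaternion in `GL₂(K)` (junk value `1` at `x = 0`). -/
def psiGL {K : Type*} [Field K] [CharZero K] (c d : K) (hcd : c ^ 2 + d ^ 2 + 1 = 0)
    (x : ℍ[ℤ]) : GL (Fin 2) K :=
  if hx : x = 0 then 1
  else Matrix.GeneralLinearGroup.mkOfDetNeZero (Mcd c d x) (det_Mcd_ne_zero hcd hx)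

variable (p l : ℕ) [Fact p.Prime] [Fact l.Prime]

/-- The map `ψ : ℍ(ℤ) → PGL₂(ℚ_p) × PGL₂(ℚ_l)` (with junk value at `0`). -/
def psi (cp dp : ℚ_[p]) (cl dl : ℚ_[l])
    (hp : cp ^ 2 + dp ^ 2 + 1 = 0) (hl : cl ^ 2 + dl ^ 2 + 1 = 0)
    (x : ℍ[ℤ]) : PGL2 ℚ_[p] × PGL2 ℚ_[l] :=
  (QuotientGroup.mk (psiGL cp dp hp x), QuotientGroup.mk (psiGL cl dl hl x))

/-- The group `Γ = ψ(Γ̃)`, as the subgroup of `PGL₂(ℚ_p) × PGL₂(ℚ_l)` generated by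
the image `ψ(Γ̃)` (this image is itself closed under multiplication and inverses,
so it coincides with the generated subgroup). -/
def Gamma (cp dp : ℚ_[p]) (cl dl : ℚ_[l])
    (hp : cp ^ 2 + dp ^ 2 + 1 = 0) (hl : cl ^ 2 + dl ^ 2 + 1 = 0) :
    Subgroup (PGL2 ℚ_[p] × PGL2 ℚ_[l]) :=
  Subgroup.closure (psi p l cp dp cl dl hp hl '' GammaTilde p l)

/-- The subgroup `Γ_p = ⟨ψ(Ã)⟩`. -/
def GammaP (cp dp : ℚ_[p]) (cl dl : ℚ_[l])
    (hp : cp ^ 2 + dp ^ 2 + 1 = 0) (hl : cl ^ 2 + dl ^ 2 + 1 = 0) :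
    Subgroup (PGL2 ℚ_[p] × PGL2 ℚ_[l]) :=
  Subgroup.closure (psi p l cp dp cl dl hp hl '' Atilde p l)

/-- The subgroup `Γ_l = ⟨ψ(B̃)⟩`. -/
def GammaL (cp dp : ℚ_[p]) (cl dl : ℚ_[l])
    (hp : cp ^ 2 + dp ^ 2 + 1 = 0) (hl : cl ^ 2 + dl ^ 2 + 1 = 0) :
    Subgroup (PGL2 ℚ_[p] × PGL2 ℚ_[l]) :=
  Subgroup.closure (psi p l cp dp cl dl hp hl '' Btilde p l)


section AuxLemmas

variable {K : Type*} [Field K] [CharZero K]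

lemma Mcd_mul {c d : K} (hcd : c ^ 2 + d ^ 2 + 1 = 0) (x y : ℍ[ℤ]) :
    Mcd c d (x * y) = Mcd c d x * Mcd c d y := by
  ext i j
  fin_cases i <;> fin_cases j <;>
    · simp [Mcd, Matrix.mul_apply, Fin.sum_univ_two, Quaternion.re_mul, Quaternion.imI_mul,
        Quaternion.imJ_mul, Quaternion.imK_mul]
      push_cast
      first
      | linear_combination (-(x.imI : K) * y.imI - (x.imK : K) * y.imK) * hcd
      | linear_combination ((x.imK : K) * y.imI - (x.imI : K) * y.imK) * hcd
      | linear_combination ((x.imI : K) * y.imK - (x.imK : K) * y.imI) * hcd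

lemma Mcd_neg (c d : K) (x : ℍ[ℤ]) : Mcd c d (-x) = -(Mcd c d x) := by
  ext i j
  fin_cases i <;> fin_cases j <;>
    · simp [Mcd]
      push_cast
      ring

lemma Mcd_inj {c d : K} (hcd : c ^ 2 + d ^ 2 + 1 = 0) {x y : ℍ[ℤ]}
    (h : Mcd c d x = Mcd c d y) : x = y := by
  have E00 := congrFun (congrFun h 0) 0
  have E01 := congrFun (congrFun h 0) 1
  have E10 := congrFun (congrFun h 1) 0
  have E11 := congrFun (congrFun h 1) 1
  simp only [Mcd, Matrix.cons_val', Matrix.cons_val_zero, Matrix.cons_val_one,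
    Matrix.head_cons, Matrix.of_apply, Matrix.empty_val', Matrix.cons_val_fin_one,
    Matrix.head_fin_const] at E00 E01 E10 E11
  ext
  · have : (x.re : K) = (y.re : K) := by linear_combination (E00 + E11) / 2
    exact_mod_cast this
  · have : (x.imI : K) = (y.imI : K) := by
      linear_combination ((x.imI : K) - y.imI) * hcd - (c/2) * E00 + (c/2) * E11
        + (d/2) * E01 + (d/2) * E10
    exact_mod_cast this
  · have : (x.imJ : K) = (y.imJ : K) := by linear_combination (E01 - E10) / 2
    exact_mod_cast this
  · have : (x.imK : K) = (y.imK : K) := by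
      linear_combination ((x.imK : K) - y.imK) * hcd - (d/2) * E00 + (d/2) * E11
        - (c/2) * E01 - (c/2) * E10
    exact_mod_cast this

lemma center_GL2_scalar {z : GL (Fin 2) K}
    (hz : z ∈ Subgroup.center (GL (Fin 2) K)) :
    ∃ a : K, (z : Matrix (Fin 2) (Fin 2) K) = a • (1 : Matrix (Fin 2) (Fin 2) K) := by
  have hdetU : (!![1, 1; 0, 1] : Matrix (Fin 2) (Fin 2) K).det ≠ 0 := by
    simp [Matrix.det_fin_two_of]
  have hdetL : (!![1, 0; 1, 1] : Matrix (Fin 2) (Fin 2) K).det ≠ 0 := by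
    simp [Matrix.det_fin_two_of]
  set U : GL (Fin 2) K := Matrix.GeneralLinearGroup.mkOfDetNeZero _ hdetU with hU
  set L : GL (Fin 2) K := Matrix.GeneralLinearGroup.mkOfDetNeZero _ hdetL with hL
  have hUz' := congrArg Units.val (Subgroup.mem_center_iff.mp hz U)
  have hLz' := congrArg Units.val (Subgroup.mem_center_iff.mp hz L)
  rw [Units.val_mul, Units.val_mul] at hUz' hLz'
  have hUm : ((U : GL (Fin 2) K) : Matrix (Fin 2) (Fin 2) K) = !![1, 1; 0, 1] := rfl
  have hLm : ((L : GL (Fin 2) K) : Matrix (Fin 2) (Fin 2) K) = !![1, 0; 1, 1] := rfl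
  rw [hUm] at hUz'
  rw [hLm] at hLz'
  have e1 := congrFun (congrFun hUz' 0) 0
  have e2 := congrFun (congrFun hUz' 0) 1
  have e3 := congrFun (congrFun hLz' 0) 0
  simp [Matrix.mul_apply, Fin.sum_univ_two] at e1 e2 e3
  refine ⟨(z : Matrix (Fin 2) (Fin 2) K) 0 0, ?_⟩
  ext i j
  fin_cases i <;> fin_cases j <;> simp [Matrix.one_apply] <;>
    first
    | rfl
    | linear_combination e1
    | linear_combination -e1
    | linear_combination e2
    | linear_combination -e2
    | linear_combination e3
    | linear_combination -e3

lemma gammaTilde_ne_zero_odd_re {p l : ℕ} (hp : p.Prime) (hl : l.Prime)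
    (hp2 : p ≠ 2) (hl2 : l ≠ 2) {x : ℍ[ℤ]} (hx : x ∈ GammaTilde p l) :
    x ≠ 0 ∧ Odd x.re := by
  obtain ⟨⟨r, s, hrs⟩, h1, h3⟩ := hx
  have hoddp : Odd ((p : ℤ)) := by exact_mod_cast hp.odd_of_ne_two hp2
  have hoddl : Odd ((l : ℤ)) := by exact_mod_cast hl.odd_of_ne_two hl2
  have hodd : Odd (Quaternion.normSq x) := by
    rw [hrs]; exact (hoddp.pow).mul (hoddl.pow)
  have hne : x ≠ 0 := by
    rintro rfl
    rw [map_zero] at hodd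
    exact (Int.not_odd_iff_even.mpr Even.zero) hodd
  have h2 := Int.odd_iff.mp hodd
  have h4 : Quaternion.normSq x % 4 = 1 ∨ Quaternion.normSq x % 4 = 3 := by omega
  rcases h4 with h4 | h4
  · exact ⟨hne, (h1 h4).1⟩
  · exact ⟨hne, (h3 h4).2.1⟩

lemma not_anticommute {x y : ℍ[ℤ]} (hx : Odd x.re) (hy : Odd y.re)
    (h : x * y = -(y * x)) : False := by
  have e0 := congrArg QuaternionAlgebra.re h
  have e1 := congrArg QuaternionAlgebra.imI h
  have e2 := congrArg QuaternionAlgebra.imJ h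
  have e3 := congrArg QuaternionAlgebra.imK h
  simp only [Quaternion.re_mul, Quaternion.imI_mul, Quaternion.imJ_mul,
    Quaternion.imK_mul, Quaternion.re_neg, Quaternion.imI_neg, Quaternion.imJ_neg,
    Quaternion.imK_neg] at e0 e1 e2 e3
  have key2 : 2 * (y.re * (x.re ^ 2 + x.imI ^ 2 + x.imJ ^ 2 + x.imK ^ 2)) = 0 := by
    linear_combination x.re * e0 + x.imI * e1 + x.imJ * e2 + x.imK * e3
  have key : y.re * (x.re ^ 2 + x.imI ^ 2 + x.imJ ^ 2 + x.imK ^ 2) = 0 := by omega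
  have hx0 : x.re ≠ 0 := by
    intro h0
    have := Int.odd_iff.mp hx
    omega
  have hy0 : y.re ≠ 0 := by
    intro h0
    have := Int.odd_iff.mp hy
    omega
  have hpos : 0 < x.re ^ 2 + x.imI ^ 2 + x.imJ ^ 2 + x.imK ^ 2 := by
    have h1 : 0 < x.re ^ 2 := by positivity
    nlinarith [sq_nonneg x.imI, sq_nonneg x.imJ, sq_nonneg x.imK]
  exact mul_ne_zero hy0 (ne_of_gt hpos) key

lemma psiGL_coe {c d : K} (hcd : c ^ 2 + d ^ 2 + 1 = 0) {x : ℍ[ℤ]} (hx : x ≠ 0) :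
    ((psiGL c d hcd x : GL (Fin 2) K) : Matrix (Fin 2) (Fin 2) K) = Mcd c d x := by
  rw [psiGL, dif_neg hx]
  rfl

lemma psiGL_commute {c d : K} (hcd : c ^ 2 + d ^ 2 + 1 = 0) {x y : ℍ[ℤ]}
    (hx : x ≠ 0) (hy : y ≠ 0) (h : x * y = y * x) :
    psiGL c d hcd x * psiGL c d hcd y = psiGL c d hcd y * psiGL c d hcd x := by
  apply Units.ext
  rw [Units.val_mul, Units.val_mul, psiGL_coe hcd hx, psiGL_coe hcd hy,
    ← Mcd_mul hcd, ← Mcd_mul hcd, h]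

/-- Backward direction at one place: commuting mod the center forces commuting or
anticommuting, and anticommuting is impossible. -/
lemma commute_of_pgl_commute {c d : K} (hcd : c ^ 2 + d ^ 2 + 1 = 0) {x y : ℍ[ℤ]}
    (hx0 : x ≠ 0) (hy0 : y ≠ 0) (hxre : Odd x.re) (hyre : Odd y.re)
    (h : (QuotientGroup.mk (psiGL c d hcd x * psiGL c d hcd y) :
            GL (Fin 2) K ⧸ Subgroup.center (GL (Fin 2) K)) =
         QuotientGroup.mk (psiGL c d hcd y * psiGL c d hcd x)) :
    x * y = y * x := by
  set A := psiGL c d hcd x with hA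
  set B := psiGL c d hcd y with hB
  have hz : (A * B)⁻¹ * (B * A) ∈ Subgroup.center (GL (Fin 2) K) :=
    QuotientGroup.eq.mp h
  obtain ⟨a, ha⟩ := center_GL2_scalar hz
  have hBA : B * A = (A * B) * ((A * B)⁻¹ * (B * A)) := by group
  have hmat : Mcd c d (y * x) = a • Mcd c d (x * y) := by
    have h1 : ((B * A : GL (Fin 2) K) : Matrix (Fin 2) (Fin 2) K) =
        ((A * B : GL (Fin 2) K) : Matrix (Fin 2) (Fin 2) K) * (a • 1) := by
      conv_lhs => rw [hBA]
      rw [Units.val_mul, ha]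
    rw [Units.val_mul, Units.val_mul, psiGL_coe hcd hx0, psiGL_coe hcd hy0,
      ← Mcd_mul hcd, ← Mcd_mul hcd] at h1
    rw [h1, Matrix.mul_smul, Matrix.mul_one]
  have hdet : ((Quaternion.normSq (y * x) : ℤ) : K) =
      a ^ 2 * ((Quaternion.normSq (x * y) : ℤ) : K) := by
    have := congrArg Matrix.det hmat
    rwa [det_Mcd hcd, Matrix.det_smul, det_Mcd hcd, Fintype.card_fin] at this
  have hnorm_eq : Quaternion.normSq (y * x) = Quaternion.normSq (x * y) := by
    rw [_root_.map_mul, _root_.map_mul, mul_comm]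
  have hnz : ((Quaternion.normSq (x * y) : ℤ) : K) ≠ 0 := by
    exact_mod_cast Quaternion.normSq_ne_zero.mpr (mul_ne_zero hx0 hy0)
  have ha2 : a ^ 2 = 1 := by
    rw [hnorm_eq] at hdet
    have h2 : (a ^ 2 - 1) * ((Quaternion.normSq (x * y) : ℤ) : K) = 0 := by
      linear_combination -hdet
    rcases mul_eq_zero.mp h2 with h' | h'
    · linear_combination h'
    · exact absurd h' hnz
  have ha1 : a = 1 ∨ a = -1 := by
    have : (a - 1) * (a + 1) = 0 := by linear_combination ha2
    rcases mul_eq_zero.mp this with h' | h'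
    · exact Or.inl (sub_eq_zero.mp h')
    · exact Or.inr (eq_neg_of_add_eq_zero_left h')
  rcases ha1 with rfl | rfl
  · rw [one_smul] at hmat
    exact (Mcd_inj hcd hmat).symm
  · rw [neg_smul, one_smul, ← Mcd_neg] at hmat
    exact absurd (Mcd_inj hcd hmat) (by
      intro hcon
      exact not_anticommute hyre hxre hcon)

end AuxLemmas

/-- Lemma 2: elements `x, y ∈ Γ̃` commute in `ℍ(ℤ)` if and only if their images
`ψ(x), ψ(y)` commute in `PGL₂(ℚ_p) × PGL₂(ℚ_l)`. -/
theorem commute_iff_psi_commute (p l : ℕ) [Fact p.Prime] [Fact l.Prime]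
    (hp2 : p ≠ 2) (hl2 : l ≠ 2) (hpl : p ≠ l)
    (cp dp : ℚ_[p]) (cl dl : ℚ_[l])
    (hcp : cp ^ 2 + dp ^ 2 + 1 = 0) (hcl : cl ^ 2 + dl ^ 2 + 1 = 0)
    (x y : ℍ[ℤ]) (hx : x ∈ GammaTilde p l) (hy : y ∈ GammaTilde p l) :
    x * y = y * x ↔
      psi p l cp dp cl dl hcp hcl x * psi p l cp dp cl dl hcp hcl y =
        psi p l cp dp cl dl hcp hcl y * psi p l cp dp cl dl hcp hcl x := by
  haveI : Fact (p.Prime) := inferInstance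
  obtain ⟨hx0, hxre⟩ := gammaTilde_ne_zero_odd_re Fact.out Fact.out hp2 hl2 hx
  obtain ⟨hy0, hyre⟩ := gammaTilde_ne_zero_odd_re Fact.out Fact.out hp2 hl2 hy
  constructor
  · intro h
    have h1 := psiGL_commute hcp hx0 hy0 h
    have h2 := psiGL_commute hcl hx0 hy0 h
    simp only [psi, Prod.mk_mul_mk, Prod.mk.injEq, ← QuotientGroup.mk_mul, h1, h2,
      and_self]
  · intro h
    have h1 := congrArg Prod.fst h
    simp only [psi, Prod.fst_mul, ← QuotientGroup.mk_mul] at h1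
    exact commute_of_pgl_commute hcp hx0 hy0 hxre hyre h1
end
end

section
/- Let x, y ∈ ℍ(ℚ) each have nonzero imaginary part, and suppose the real part y₀ of y is nonzero. Then yxy⁻¹ commutes with x if and only if y commutes with x. -/
open Quaternion

set_option maxHeartbeats 1000000 in

/-- Lemma 4(a): if `x, y ∈ ℍ(ℚ)` have nonzero imaginary parts and `y` has nonzero
real part, then `yxy⁻¹` commutes with `x` if and only if `y` commutes with `x`. -/
theorem conj_commute_iff (x y : ℍ[ℚ])
    (hx : ¬ (x.imI = 0 ∧ x.imJ = 0 ∧ x.imK = 0))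
    (hy : ¬ (y.imI = 0 ∧ y.imJ = 0 ∧ y.imK = 0))
    (hy0 : y.re ≠ 0) :
    (y * x * y⁻¹) * x = x * (y * x * y⁻¹) ↔ y * x = x * y := by
  have hyne : y ≠ 0 := fun h => hy0 (by rw [h]; simp)
  have hsy : (star y : ℍ[ℚ]) = (Quaternion.normSq y : ℚ) • y⁻¹ := by
    rw [Quaternion.inv_def, smul_smul,
      mul_inv_cancel₀ (Quaternion.normSq_ne_zero.2 hyne), one_smul]
  constructor
  · intro h
    have h' : y * x * star y * x = x * (y * x * star y) := by
      rw [hsy]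
      simp only [Algebra.mul_smul_comm, Algebra.smul_mul_assoc]
      exact congrArg _ h
    have e2 := congrArg QuaternionAlgebra.imI h'
    have e3 := congrArg QuaternionAlgebra.imJ h'
    have e4 := congrArg QuaternionAlgebra.imK h'
    simp only [Quaternion.imI_mul, Quaternion.imJ_mul, Quaternion.imK_mul,
      Quaternion.re_mul, Quaternion.re_star, Quaternion.imI_star,
      Quaternion.imJ_star, Quaternion.imK_star] at e2 e3 e4
    have key : y.re * ((y.imJ * x.imK - y.imK * x.imJ) ^ 2
        + (y.imK * x.imI - y.imI * x.imK) ^ 2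
        + (y.imI * x.imJ - y.imJ * x.imI) ^ 2) = 0 := by
      linear_combination (-(y.imI) / 4) * e2 + (-(y.imJ) / 4) * e3 + (-(y.imK) / 4) * e4
    have hsum : (y.imJ * x.imK - y.imK * x.imJ) ^ 2
        + (y.imK * x.imI - y.imI * x.imK) ^ 2
        + (y.imI * x.imJ - y.imJ * x.imI) ^ 2 = 0 :=
      (mul_eq_zero.mp key).resolve_left hy0
    have s1 := sq_nonneg (y.imJ * x.imK - y.imK * x.imJ)
    have s2 := sq_nonneg (y.imK * x.imI - y.imI * x.imK)
    have s3 := sq_nonneg (y.imI * x.imJ - y.imJ * x.imI)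
    have hc1 : y.imJ * x.imK - y.imK * x.imJ = 0 :=
      pow_eq_zero_iff two_ne_zero |>.mp (le_antisymm (by linarith) s1)
    have hc2 : y.imK * x.imI - y.imI * x.imK = 0 :=
      pow_eq_zero_iff two_ne_zero |>.mp (le_antisymm (by linarith) s2)
    have hc3 : y.imI * x.imJ - y.imJ * x.imI = 0 :=
      pow_eq_zero_iff two_ne_zero |>.mp (le_antisymm (by linarith) s3)
    ext <;>
      simp only [Quaternion.re_mul, Quaternion.imI_mul, Quaternion.imJ_mul,
        Quaternion.imK_mul] <;>
      linarith [hc1, hc2, hc3]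
  · intro h
    have : y * x * y⁻¹ = x := by
      rw [h, mul_assoc, mul_inv_cancel₀ hyne, mul_one]
    rw [this]
end

section
/- Let p be an odd prime and let x = x₀ + z₀(c₁ i + c₂ j + c₃ k) ∈ ℍ(ℤ) with gcd(c₁, c₂, c₃) = 1, z₀ ≠ 0, gcd(x₀, z₀) = 1, and |x|² = pʳ for some integer r ≥ 1. Set n = c₁² + c₂² + c₃². Then p does not divide n if and only if p does not divide all four integer coordinates of the quaternion x² (equivalently, x² is not divisible by p in ℍ(ℤ)). -/
open Quaternion

/-- Lemma 5, (a) ⇔ (b): with `x = x₀ + z₀(c₁ i + c₂ j + c₃ k)`, `gcd(c₁,c₂,c₃) = 1`,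
`z₀ ≠ 0`, `gcd(x₀,z₀) = 1` and `|x|² = pʳ` (`r ≥ 1`), the prime `p` does not divide
`n = c₁² + c₂² + c₃²` if and only if `p` does not divide all four coordinates of `x²`. -/
theorem not_dvd_iff_sq_not_dvd (p : ℕ) (hp : p.Prime) (hp2 : p ≠ 2)
    (x₀ z₀ c₁ c₂ c₃ : ℤ) (hgcd : Int.gcd c₁ (Int.gcd c₂ c₃) = 1)
    (hz : z₀ ≠ 0) (hxz : Int.gcd x₀ z₀ = 1)
    (x : ℍ[ℤ]) (hxdef : x = ⟨x₀, z₀ * c₁, z₀ * c₂, z₀ * c₃⟩)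
    (r : ℕ) (hr : 1 ≤ r) (hnorm : Quaternion.normSq x = (p : ℤ) ^ r) :
    ¬ (p : ℤ) ∣ (c₁ ^ 2 + c₂ ^ 2 + c₃ ^ 2) ↔
      ¬ ((p : ℤ) ∣ (x ^ 2).re ∧ (p : ℤ) ∣ (x ^ 2).imI ∧
         (p : ℤ) ∣ (x ^ 2).imJ ∧ (p : ℤ) ∣ (x ^ 2).imK) := by
  have hq0 : x.re = x₀ := by rw [hxdef]
  have hq1 : x.imI = z₀ * c₁ := by rw [hxdef]
  have hq2 : x.imJ = z₀ * c₂ := by rw [hxdef]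
  have hq3 : x.imK = z₀ * c₃ := by rw [hxdef]
  have hP : Prime ((p : ℤ)) := Nat.prime_iff_prime_int.mp hp
  rw [Quaternion.normSq_def', hq0, hq1, hq2, hq3] at hnorm
  have hnorm' : x₀ ^ 2 + z₀ ^ 2 * (c₁ ^ 2 + c₂ ^ 2 + c₃ ^ 2) = (p : ℤ) ^ r := by
    rw [← hnorm]; ring
  have hppr : (p : ℤ) ∣ (p : ℤ) ^ r := dvd_pow_self _ (by omega)
  simp only [sq, Quaternion.re_mul, Quaternion.imI_mul, Quaternion.imJ_mul,
    Quaternion.imK_mul, hq0, hq1, hq2, hq3]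
  rw [not_iff_not]
  constructor
  · intro hn
    have hx0 : (p : ℤ) ∣ x₀ := by
      refine hP.dvd_of_dvd_pow (n := 2) ?_
      have h1 : (p : ℤ) ∣ x₀ ^ 2 + z₀ ^ 2 * (c₁ * c₁ + c₂ * c₂ + c₃ * c₃) := by
        have : x₀ ^ 2 + z₀ ^ 2 * (c₁ * c₁ + c₂ * c₂ + c₃ * c₃)
            = x₀ ^ 2 + z₀ ^ 2 * (c₁ ^ 2 + c₂ ^ 2 + c₃ ^ 2) := by ring
        rw [this, hnorm']; exact hppr
      have h2 : (p : ℤ) ∣ z₀ ^ 2 * (c₁ * c₁ + c₂ * c₂ + c₃ * c₃) := hn.mul_left _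
      have := dvd_sub h1 h2
      simpa using this
    obtain ⟨t, rfl⟩ := hx0
    obtain ⟨s, hs⟩ := hn
    refine ⟨⟨↑p * t * t - z₀ * z₀ * s, by linear_combination (-(z₀^2)) * hs⟩,
      ⟨t * (z₀ * c₁) + z₀ * c₁ * t, by ring⟩,
      ⟨t * (z₀ * c₂) + z₀ * c₂ * t, by ring⟩,
      ⟨t * (z₀ * c₃) + z₀ * c₃ * t, by ring⟩⟩
  · rintro ⟨h1, _, _, _⟩
    have hre : x₀ * x₀ - z₀ * c₁ * (z₀ * c₁) - z₀ * c₂ * (z₀ * c₂) - z₀ * c₃ * (z₀ * c₃)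
        = x₀ ^ 2 - z₀ ^ 2 * (c₁ ^ 2 + c₂ ^ 2 + c₃ ^ 2) := by ring
    rw [hre] at h1
    have h2 : (p : ℤ) ∣ 2 * x₀ ^ 2 := by
      have := dvd_add h1 (hnorm' ▸ hppr)
      have e : x₀ ^ 2 - z₀ ^ 2 * (c₁ ^ 2 + c₂ ^ 2 + c₃ ^ 2)
          + (x₀ ^ 2 + z₀ ^ 2 * (c₁ ^ 2 + c₂ ^ 2 + c₃ ^ 2)) = 2 * x₀ ^ 2 := by ring
      rwa [e] at this
    have hx0 : (p : ℤ) ∣ x₀ := by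
      rcases hP.dvd_mul.mp h2 with h | h
      · exfalso
        have hle : (p : ℤ) ≤ 2 := Int.le_of_dvd (by norm_num) h
        have hle' : p ≤ 2 := by exact_mod_cast hle
        have := hp.two_le
        omega
      · exact hP.dvd_of_dvd_pow h
    have hz2n : (p : ℤ) ∣ z₀ ^ 2 * (c₁ ^ 2 + c₂ ^ 2 + c₃ ^ 2) := by
      have hd := dvd_sub (hx0.mul_right x₀) h1
      have e : x₀ * x₀ - (x₀ ^ 2 - z₀ ^ 2 * (c₁ ^ 2 + c₂ ^ 2 + c₃ ^ 2))
          = z₀ ^ 2 * (c₁ ^ 2 + c₂ ^ 2 + c₃ ^ 2) := by ring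
      rwa [e] at hd
    have key : (p : ℤ) ∣ c₁ ^ 2 + c₂ ^ 2 + c₃ ^ 2 := by
      rcases hP.dvd_mul.mp hz2n with h | h
      · exfalso
        have hz0 : (p : ℤ) ∣ z₀ := hP.dvd_of_dvd_pow h
        have : (p : ℤ) ∣ (Int.gcd x₀ z₀ : ℤ) := Int.natCast_dvd_natCast.mpr (Int.dvd_gcd hx0 hz0)
        rw [hxz] at this
        exact hP.not_dvd_one (by simpa using this)
      · exact h
    obtain ⟨s, hs⟩ := key
    exact ⟨s, by rw [← hs]; ring⟩
end
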